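/- Fix an integer n ≥ 1 and let I ⊂ C[X_1, …, X_{n+3}] be the ideal generated by the 2×2 minors of the 2×(n+1) matrix whose columns are (X_1 + X_2, X_1 X_2) and (X_{k+2}, X_{k+3}) for k = 1, …, n. Then the quotient ring C[X_1, …, X_{n+3}]/I has Krull dimension 3; equivalently, the ideal I has codimension n in the (n+3)-dimensional polynomial ring. -/

import Mathlib

set_option maxHeartbeats 1600000
set_option linter.unusedSectionVars false
set_option linter.unusedVariables false
set_option linter.unusedTactic false

open MvPolynomial

/-- First row `(X_1 + X_2, X_3, X_4, …, X_{n+2})` of the matrix of the presentation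
(variables `X_1, …, X_{n+3}` are 0-indexed as `X 0, …, X (n+2)`). -/
noncomputable def row1 (n : ℕ) : Fin (n + 1) → MvPolynomial (Fin (n + 3)) ℂ := fun k =>
  if (k : ℕ) = 0 then X 0 + X 1 else X ⟨(k : ℕ) + 1, by omega⟩

/-- Second row `(X_1 X_2, X_4, X_5, …, X_{n+3})` of the matrix of the presentation. -/
noncomputable def row2 (n : ℕ) : Fin (n + 1) → MvPolynomial (Fin (n + 3)) ℂ := fun k =>
  if (k : ℕ) = 0 then X 0 * X 1 else X ⟨(k : ℕ) + 2, by omega⟩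



-- L1: trailing factor
lemma aux_trailing {R : Type*} [CommRing R] [IsDomain R] :
    ∀ (N : ℕ) (P : Polynomial R), P.natDegree ≤ N → P ≠ 0 →
      ∃ (j : ℕ) (Q : Polynomial R), P = Polynomial.X ^ j * Q ∧ Q.coeff 0 ≠ 0 := by
  intro N
  induction N with
  | zero =>
    intro P hdeg hP
    refine ⟨0, P, by simp, ?_⟩
    intro h0
    have : Polynomial.X ∣ P := Polynomial.X_dvd_iff.mpr h0
    obtain ⟨P', rfl⟩ := this
    have hP' : P' ≠ 0 := by rintro rfl; simp at hP
    have := Polynomial.natDegree_mul (Polynomial.X_ne_zero (R := R)) hP'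
    simp [Polynomial.natDegree_X] at this
    omega
  | succ N ih =>
    intro P hdeg hP
    by_cases h0 : P.coeff 0 ≠ 0
    · exact ⟨0, P, by simp, h0⟩
    · push_neg at h0
      obtain ⟨P', rfl⟩ := Polynomial.X_dvd_iff.mpr h0
      have hP' : P' ≠ 0 := by rintro rfl; simp at hP
      have hd := Polynomial.natDegree_mul (Polynomial.X_ne_zero (R := R)) hP'
      rw [Polynomial.natDegree_X] at hd
      obtain ⟨j, Q, hQ, hQ0⟩ := ih P' (by omega) hP'
      exact ⟨j + 1, Q, by rw [hQ]; ring, hQ0⟩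

-- L2: aeval at Fin.cons via finSuccEquiv
lemma aux_aeval_cons {R A : Type*} [CommRing R] [CommRing A] [Algebra R A] {m : ℕ}
    (a : A) (g : Fin m → A) (f : MvPolynomial (Fin (m + 1)) R) :
    aeval (Fin.cons a g) f =
      Polynomial.eval₂ ((aeval g : MvPolynomial (Fin m) R →ₐ[R] A) : MvPolynomial (Fin m) R →+* A)
        a (finSuccEquiv R m f) := by
  induction f using MvPolynomial.induction_on with
  | C c => simp [MvPolynomial.finSuccEquiv_apply]
  | add p q hp hq => simp [map_add, hp, hq, Polynomial.eval₂_add]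
  | mul_X p i hp =>
    rw [map_mul, map_mul, Polynomial.eval₂_mul, hp]
    congr 1
    refine Fin.cases ?_ (fun j => ?_) i
    · rw [finSuccEquiv_X_zero, Polynomial.eval₂_X, MvPolynomial.aeval_X, Fin.cons_zero]
    · rw [finSuccEquiv_X_succ, Polynomial.eval₂_C, MvPolynomial.aeval_X, Fin.cons_succ]
      simp

-- L3: step lemma for chains of primes
lemma aux_step {S : Type*} [CommRing S] [Algebra ℂ S] {p q : Ideal S} [hp : p.IsPrime]
    (hpq : p < q) {m : ℕ} {t : Fin m → S}
    (h : AlgebraicIndependent ℂ (fun i => Ideal.Quotient.mk q (t i))) :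
    ∃ t' : Fin (m + 1) → S, AlgebraicIndependent ℂ (fun i => Ideal.Quotient.mk p (t' i)) := by
  obtain ⟨f, hfq, hfp⟩ := SetLike.exists_of_lt hpq
  refine ⟨(Fin.cons f t : Fin (m+1) → S), ?_⟩
  have hfun : (fun i => Ideal.Quotient.mk p ((Fin.cons f t : Fin (m+1) → S) i)) =
      Fin.cons (Ideal.Quotient.mk p f) (fun i => Ideal.Quotient.mk p (t i)) := by
    funext i
    refine Fin.cases ?_ (fun j => ?_) i <;> simp
  rw [hfun, algebraicIndependent_iff]
  intro P hP
  by_contra hP0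
  have hP' : finSuccEquiv ℂ m P ≠ 0 := by
    simpa using (EmbeddingLike.map_ne_zero_iff (f := (finSuccEquiv ℂ m))).mpr hP0
  obtain ⟨j, Q, hQ, hQ0⟩ := aux_trailing (finSuccEquiv ℂ m P).natDegree (finSuccEquiv ℂ m P)
    le_rfl hP'
  rw [aux_aeval_cons, hQ, Polynomial.eval₂_mul, Polynomial.eval₂_X_pow] at hP
  have ha : (Ideal.Quotient.mk p f) ≠ 0 := fun hc =>
    hfp (Ideal.Quotient.eq_zero_iff_mem.mp hc)
  have h2 : Polynomial.eval₂
      ((aeval (fun i => Ideal.Quotient.mk p (t i)) :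
        MvPolynomial (Fin m) ℂ →ₐ[ℂ] S ⧸ p) : MvPolynomial (Fin m) ℂ →+* S ⧸ p)
      (Ideal.Quotient.mk p f) Q = 0 := by
    rcases mul_eq_zero.mp hP with hc | hc
    · exact absurd hc (pow_ne_zero _ ha)
    · exact hc
  -- push to S ⧸ q
  have h3 := congrArg (Ideal.Quotient.factor hpq.le) h2
  rw [Polynomial.hom_eval₂, map_zero, Ideal.Quotient.factor_mk,
    Ideal.Quotient.eq_zero_iff_mem.mpr hfq, Polynomial.eval₂_at_zero] at h3
  have h4 : aeval (fun i => Ideal.Quotient.mk q (t i)) (Q.coeff 0) = 0 := by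
    rw [← h3]
    have : ∀ x : MvPolynomial (Fin m) ℂ,
        (Ideal.Quotient.factor hpq.le) (aeval (fun i => Ideal.Quotient.mk p (t i)) x) =
          aeval (fun i => Ideal.Quotient.mk q (t i)) x := by
      intro x
      induction x using MvPolynomial.induction_on with
      | C c =>
        simp only [MvPolynomial.aeval_C]
        rw [IsScalarTower.algebraMap_apply ℂ S (S ⧸ p), IsScalarTower.algebraMap_apply ℂ S (S ⧸ q)]
        rw [Ideal.Quotient.algebraMap_eq, Ideal.Quotient.algebraMap_eq, Ideal.Quotient.factor_mk]
      | add a b hha hhb => simp [map_add, hha, hhb]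
      | mul_X a i hha => simp [map_mul, hha, Ideal.Quotient.factor_mk]
    exact (this (Q.coeff 0)).symm
  exact hQ0 (h.eq_zero_of_aeval_eq_zero _ h4)



section Counting

variable {D : Type*} [CommRing D] [IsDomain D] [Algebra ℂ D]

/-- monomial in three elements -/
def auxMon (u v w : D) (f : Fin 3 → ℕ) : D := u ^ f 0 * v ^ f 1 * w ^ f 2

/-- span of monomials of total degree at most `M` -/
def auxW (u v w : D) (M : ℕ) : Submodule ℂ D :=
  Submodule.span ℂ (auxMon u v w '' {f | f 0 + f 1 + f 2 ≤ M})

lemma auxW_mono (u v w : D) {M M' : ℕ} (h : M ≤ M') : auxW u v w M ≤ auxW u v w M' :=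
  Submodule.span_mono (Set.image_mono (fun f hf => le_trans hf h))

lemma auxW_one (u v w : D) : (1 : D) ∈ auxW u v w 0 :=
  Submodule.subset_span ⟨fun _ => 0, by simp, by simp [auxMon]⟩

lemma auxW_mul (u v w : D) {M1 M2 : ℕ} {x y : D} (hx : x ∈ auxW u v w M1)
    (hy : y ∈ auxW u v w M2) : x * y ∈ auxW u v w (M1 + M2) := by
  have hle : auxW u v w M1 * auxW u v w M2 ≤ auxW u v w (M1 + M2) := by
    rw [auxW, auxW, Submodule.span_mul_span]
    refine Submodule.span_le.mpr ?_
    rintro z ⟨a, ⟨f, hf, rfl⟩, b, ⟨g, hg, rfl⟩, rfl⟩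
    refine Submodule.subset_span ⟨fun i => f i + g i, ?_, ?_⟩
    · simp only [Set.mem_setOf_eq] at hf hg ⊢
      omega
    · simp [auxMon, pow_add]
      ring
  exact hle (Submodule.mul_mem_mul hx hy)

lemma auxW_pow (u v w : D) {d : ℕ} {x : D} (hx : x ∈ auxW u v w d) :
    ∀ r : ℕ, x ^ r ∈ auxW u v w (r * d)
  | 0 => by simpa using auxW_one u v w
  | (r + 1) => by
    have := auxW_mul u v w (auxW_pow u v w hx r) hx
    rw [← pow_succ] at this
    convert this using 2
    ring

lemma auxW_prod (u v w : D) {ι : Type*} (s : Finset ι) (g : ι → D) (dg : ι → ℕ)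
    (h : ∀ i ∈ s, g i ∈ auxW u v w (dg i)) :
    (∏ i ∈ s, g i) ∈ auxW u v w (∑ i ∈ s, dg i) := by
  classical
  induction s using Finset.induction_on with
  | empty => simpa using auxW_one u v w
  | insert a s' hnot ih =>
    rw [Finset.prod_insert hnot, Finset.sum_insert hnot]
    exact auxW_mul u v w (h a (Finset.mem_insert_self a s'))
      (ih fun i hi => h i (Finset.mem_insert_of_mem hi))

lemma auxW_of_adjoin (u v w : D) {x : D} (hx : x ∈ Algebra.adjoin ℂ {u, v, w}) :
    ∃ M, x ∈ auxW u v w M := by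
  induction hx using Algebra.adjoin_induction with
  | mem x hx =>
    simp only [Set.mem_insert_iff, Set.mem_singleton_iff] at hx
    rcases hx with rfl | rfl | rfl
    · exact ⟨1, Submodule.subset_span ⟨fun i => if i = 0 then 1 else 0, by simp,
        by simp [auxMon]⟩⟩
    · exact ⟨1, Submodule.subset_span ⟨fun i => if i = 1 then 1 else 0, by simp,
        by simp [auxMon]⟩⟩
    · exact ⟨1, Submodule.subset_span ⟨fun i => if i = 2 then 1 else 0, by simp,
        by simp [auxMon]⟩⟩
  | algebraMap r =>
    exact ⟨0, by rw [Algebra.algebraMap_eq_smul_one]; exact Submodule.smul_mem _ _ (auxW_one u v w)⟩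
  | add x y hx hy ihx ihy =>
    obtain ⟨M1, h1⟩ := ihx
    obtain ⟨M2, h2⟩ := ihy
    exact ⟨max M1 M2, Submodule.add_mem _ (auxW_mono u v w (le_max_left _ _) h1)
      (auxW_mono u v w (le_max_right _ _) h2)⟩
  | mul x y hx hy ihx ihy =>
    obtain ⟨M1, h1⟩ := ihx
    obtain ⟨M2, h2⟩ := ihy
    exact ⟨M1 + M2, auxW_mul u v w h1 h2⟩

end Counting

lemma aux_notIndep {D : Type*} [CommRing D] [IsDomain D] [Algebra ℂ D]
    (u v w Q : D) (hQ0 : Q ≠ 0) (hQ : Q ∈ Algebra.adjoin ℂ {u, v, w})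
    (t : Fin 4 → D) (ht : ∀ i, ∃ k, t i * Q ^ k ∈ Algebra.adjoin ℂ {u, v, w}) :
    ¬ AlgebraicIndependent ℂ t := by
  classical
  intro hind
  choose k hk using ht
  set K : ℕ := Finset.univ.sup k with hKdef
  have hkK : ∀ i, t i * Q ^ K ∈ Algebra.adjoin ℂ {u, v, w} := by
    intro i
    have hle : k i ≤ K := Finset.le_sup (Finset.mem_univ i)
    have : t i * Q ^ K = (t i * Q ^ (k i)) * Q ^ (K - k i) := by
      rw [mul_assoc, ← pow_add]
      congr 2
      omega
    rw [this]
    exact mul_mem (hk i) (pow_mem hQ _)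
  choose M hM using fun i => auxW_of_adjoin u v w (hkK i)
  obtain ⟨MQ, hMQ⟩ := auxW_of_adjoin u v w hQ
  set d : ℕ := max (Finset.univ.sup M) MQ with hddef
  have hMd : ∀ i, t i * Q ^ K ∈ auxW u v w d := fun i =>
    auxW_mono u v w (le_trans (Finset.le_sup (Finset.mem_univ i)) (le_max_left _ _)) (hM i)
  have hQd : Q ∈ auxW u v w d := auxW_mono u v w (le_max_right _ _) hMQ
  set c : ℕ := 4 * (1 + K) * d + 1 with hcdef
  set B : ℕ := c ^ 3 with hBdef
  set Mbig : ℕ := 4 * B * (1 + K) * d with hMbigdef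
  -- the family of monomials in t, times a power of Q
  set F : (Fin 4 → Fin (B + 1)) → D :=
    fun e => Q ^ (4 * B * K) * ∏ i : Fin 4, t i ^ ((e i : ℕ)) with hFdef
  -- linear independence of F
  have hinj : Function.Injective (MvPolynomial.aeval t :
      MvPolynomial (Fin 4) ℂ →ₐ[ℂ] D) := hind
  have h1 : LinearIndependent ℂ (fun s : (Fin 4 →₀ ℕ) => (MvPolynomial.monomial s (1 : ℂ))) := by
    have := (MvPolynomial.basisMonomials (Fin 4) ℂ).linearIndependent
    rwa [MvPolynomial.coe_basisMonomials] at this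
  have hι : Function.Injective (fun e : Fin 4 → Fin (B + 1) =>
      (Finsupp.equivFunOnFinite.symm (fun i => (e i : ℕ)) : Fin 4 →₀ ℕ)) := by
    intro e e' h
    have h2 := congrArg (⇑Finsupp.equivFunOnFinite) h
    simp only [Equiv.apply_symm_apply] at h2
    funext i
    exact Fin.val_injective (congrFun h2 i)
  have h2 := h1.comp _ hι
  have h3 := h2.map' (MvPolynomial.aeval t).toLinearMap
    (LinearMap.ker_eq_bot.mpr hinj)
  have h4 : LinearIndependent ℂ (fun e : Fin 4 → Fin (B + 1) =>
      ∏ i : Fin 4, t i ^ ((e i : ℕ))) := by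
    convert h3 using 1
    funext e
    simp only [Function.comp, AlgHom.toLinearMap_apply, MvPolynomial.aeval_monomial, map_one,
      one_mul]
    rw [Finsupp.prod_fintype]
    · simp
    · intro i; exact pow_zero _
    all_goals rfl
  have h5 : LinearIndependent ℂ F := by
    have := h4.map' (LinearMap.mulLeft ℂ (Q ^ (4 * B * K)))
      (LinearMap.ker_eq_bot.mpr (mul_right_injective₀ (pow_ne_zero _ hQ0)))
    convert this using 1
    all_goals rfl
  -- each F e lies in auxW Mbig
  have hFmem : ∀ e, F e ∈ auxW u v w Mbig := by
    intro e
    set E : ℕ := ∑ i : Fin 4, (e i : ℕ) with hEdef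
    have hE : E ≤ 4 * B := by
      have : ∀ i : Fin 4, (e i : ℕ) ≤ B := fun i => Fin.is_le _
      calc E ≤ ∑ _i : Fin 4, B := Finset.sum_le_sum (fun i _ => this i)
        _ = 4 * B := by simp [Finset.sum_const]
    have hsplit : F e = (∏ i : Fin 4, (t i * Q ^ K) ^ ((e i : ℕ))) * Q ^ (K * (4 * B - E)) := by
      have hh1 : ∏ i : Fin 4, (t i * Q ^ K) ^ ((e i : ℕ)) =
          (∏ i : Fin 4, t i ^ ((e i : ℕ))) * Q ^ (K * E) := by
        simp only [mul_pow]
        rw [Finset.prod_mul_distrib, Finset.prod_pow_eq_pow_sum, ← pow_mul, ← hEdef]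
      have hh2 : K * E + K * (4 * B - E) = 4 * B * K := by
        rw [← Nat.mul_add]
        have : E + (4 * B - E) = 4 * B := by omega
        rw [this]; ring
      rw [hh1, mul_assoc, ← pow_add, hh2, hFdef]
      simp only []
      ring
    rw [hsplit]
    have hp : (∏ i : Fin 4, (t i * Q ^ K) ^ ((e i : ℕ))) ∈
        auxW u v w (∑ i : Fin 4, (e i : ℕ) * d) :=
      auxW_prod u v w Finset.univ _ _ (fun i _ => auxW_pow u v w (hMd i) _)
    have hq : Q ^ (K * (4 * B - E)) ∈ auxW u v w ((K * (4 * B - E)) * d) :=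
      auxW_pow u v w hQd _
    have := auxW_mul u v w hp hq
    refine auxW_mono u v w ?_ this
    have h6 : (∑ i : Fin 4, (e i : ℕ) * d) = E * d := by
      rw [hEdef, Finset.sum_mul]
    rw [h6]
    have h7 : E * d ≤ 4 * B * d := Nat.mul_le_mul_right d hE
    have h8 : (K * (4 * B - E)) * d ≤ K * (4 * B) * d := by
      have : K * (4 * B - E) ≤ K * (4 * B) := Nat.mul_le_mul_left K (by omega)
      exact Nat.mul_le_mul_right d this
    calc E * d + (K * (4 * B - E)) * d ≤ 4 * B * d + K * (4 * B) * d := Nat.add_le_add h7 h8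
      _ = 4 * B * (1 + K) * d := by ring
  -- finite-dimensional container
  set gmon : (Fin 3 → Fin (Mbig + 1)) → D := fun f => auxMon u v w (fun i => (f i : ℕ))
    with hgmon
  have hWV : auxW u v w Mbig ≤ Submodule.span ℂ (Set.range gmon) := by
    rw [auxW]
    refine Submodule.span_le.mpr ?_
    rintro z ⟨f, hf, rfl⟩
    simp only [Set.mem_setOf_eq] at hf
    refine Submodule.subset_span ⟨fun i => ⟨f i, by fin_cases i <;> simp <;> omega⟩, ?_⟩
    simp [hgmon]
  haveI : FiniteDimensional ℂ (Submodule.span ℂ (Set.range gmon)) :=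
    FiniteDimensional.span_of_finite ℂ (Set.finite_range gmon)
  set V := Submodule.span ℂ (Set.range gmon) with hV
  set F' : (Fin 4 → Fin (B + 1)) → V := fun e => ⟨F e, hWV (hFmem e)⟩ with hF'
  have h9 : LinearIndependent ℂ F' := by
    refine LinearIndependent.of_comp V.subtype ?_
    convert h5 using 1
    rfl
  have h10 : Fintype.card (Fin 4 → Fin (B + 1)) ≤ Module.finrank ℂ V :=
    h9.fintype_card_le_finrank
  have h11 : Module.finrank ℂ V ≤ (Set.range gmon).toFinset.card := by
    rw [hV]
    exact finrank_span_le_card (Set.range gmon)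
  have h12 : (Set.range gmon).toFinset.card ≤ Fintype.card (Fin 3 → Fin (Mbig + 1)) := by
    rw [Set.toFinset_range]
    exact le_trans Finset.card_image_le (le_of_eq (Finset.card_univ))
  have hcard1 : Fintype.card (Fin 4 → Fin (B + 1)) = (B + 1) ^ 4 := by
    simp [Fintype.card_fun]
  have hcard2 : Fintype.card (Fin 3 → Fin (Mbig + 1)) = (Mbig + 1) ^ 3 := by
    simp [Fintype.card_fun]
  -- numerical contradiction
  have hnum : (B + 1) ^ 4 ≤ (Mbig + 1) ^ 3 := by
    rw [← hcard1, ← hcard2]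
    exact le_trans h10 (le_trans h11 h12)
  have hM1 : Mbig + 1 ≤ c * (B + 1) := by
    have : c * (B + 1) = 4 * B * (1 + K) * d + (B + 4 * (1 + K) * d + 1) := by
      rw [hcdef]; ring
    rw [this, hMbigdef]
    omega
  have hfinal : (Mbig + 1) ^ 3 < (B + 1) ^ 4 := by
    calc (Mbig + 1) ^ 3 ≤ (c * (B + 1)) ^ 3 := Nat.pow_le_pow_left hM1 3
      _ = B * (B + 1) ^ 3 := by rw [mul_pow, ← hBdef]
      _ < (B + 1) * (B + 1) ^ 3 := by
          have hpos : (0:ℕ) < (B + 1) ^ 3 := pow_pos (Nat.succ_pos B) 3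
          exact (Nat.mul_lt_mul_right hpos).mpr (Nat.lt_succ_self B)
      _ = (B + 1) ^ 4 := by ring
  omega



lemma aux_catalogue (n : ℕ) (hn : 1 ≤ n) {D : Type*} [CommRing D] [IsDomain D] [Algebra ℂ D]
    (z : Fin (n + 3) → D)
    (hrel : ∀ i j : Fin (n + 1),
      aeval z (row1 n i * row2 n j - row1 n j * row2 n i) = 0) :
    ∃ u v w Q : D, Q ≠ 0 ∧ Q ∈ Algebra.adjoin ℂ {u, v, w} ∧
      ∀ i : Fin (n + 3), ∃ k : ℕ, z i * Q ^ k ∈ Algebra.adjoin ℂ ({u, v, w} : Set D) := by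
  classical
  set z' : ℕ → D := fun j => if h : j < n + 3 then z ⟨j, h⟩ else 0 with hz'def
  have hz' : ∀ (j : ℕ) (h : j < n + 3), z' j = z ⟨j, h⟩ := fun j h => dif_pos h
  have hzi : ∀ i : Fin (n + 3), z i = z' (i : ℕ) := by
    intro i
    rw [hz' _ i.isLt]
  have hminor : ∀ i j : Fin (n + 1),
      aeval z (row1 n i) * aeval z (row2 n j) = aeval z (row1 n j) * aeval z (row2 n i) := by
    intro i j
    have := hrel i j
    rwa [map_sub, map_mul, map_mul, sub_eq_zero] at this
  have hr1 : ∀ (k : ℕ) (hk : k ≤ n), 1 ≤ k →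
      aeval z (row1 n ⟨k, by omega⟩) = z' (k + 1) := by
    intro k hk hk1
    rw [row1, if_neg (by simpa using by omega : ¬ ((⟨k, by omega⟩ : Fin (n+1)) : ℕ) = 0)]
    rw [aeval_X, hz' (k + 1) (by omega)]
  have hr2 : ∀ (k : ℕ) (hk : k ≤ n), 1 ≤ k →
      aeval z (row2 n ⟨k, by omega⟩) = z' (k + 2) := by
    intro k hk hk1
    rw [row2, if_neg (by simpa using by omega : ¬ ((⟨k, by omega⟩ : Fin (n+1)) : ℕ) = 0)]
    rw [aeval_X, hz' (k + 2) (by omega)]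
  have hr10 : aeval z (row1 n ⟨0, by omega⟩) = z' 0 + z' 1 := by
    rw [row1, if_pos rfl, map_add, aeval_X, aeval_X, hz' 0 (by omega), hz' 1 (by omega)]
    rfl
  have hr20 : aeval z (row2 n ⟨0, by omega⟩) = z' 0 * z' 1 := by
    rw [row2, if_pos rfl, map_mul, aeval_X, aeval_X, hz' 0 (by omega), hz' 1 (by omega)]
    rfl
  have rel0 : ∀ k : ℕ, 1 ≤ k → k ≤ n →
      (z' 0 + z' 1) * z' (k + 2) = z' 0 * z' 1 * z' (k + 1) := by
    intro k hk1 hk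
    have := hminor ⟨0, by omega⟩ ⟨k, by omega⟩
    rw [hr10, hr20, hr1 k hk hk1, hr2 k hk hk1] at this
    linear_combination this
  have relH : ∀ k l : ℕ, 1 ≤ k → k ≤ n → 1 ≤ l → l ≤ n →
      z' (k + 1) * z' (l + 2) = z' (l + 1) * z' (k + 2) := by
    intro k l hk1 hk hl1 hl
    have := hminor ⟨k, by omega⟩ ⟨l, by omega⟩
    rwa [hr1 k hk hk1, hr2 k hk hk1, hr1 l hl hl1, hr2 l hl hl1] at this
  by_cases hall : ∀ j : ℕ, 2 ≤ j → j ≤ n + 2 → z' j = 0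
  · refine ⟨z' 0, z' 1, 0, 1, one_ne_zero, one_mem _, fun i => ⟨0, ?_⟩⟩
    rw [pow_zero, mul_one, hzi i]
    rcases Nat.lt_or_ge (i : ℕ) 2 with h2 | h2
    · interval_cases h : (i : ℕ)
      · exact Algebra.subset_adjoin (by simp)
      · exact Algebra.subset_adjoin (by simp)
    · rw [hall (i : ℕ) h2 (by omega)]
      exact zero_mem _
  · push_neg at hall
    obtain ⟨j0, hj02, hj0n, hj0ne⟩ := hall
    have hex : ∃ j : ℕ, 2 ≤ j ∧ j ≤ n + 2 ∧ z' j ≠ 0 := ⟨j0, hj02, hj0n, hj0ne⟩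
    set m : ℕ := Nat.find hex with hmdef
    obtain ⟨hm2, hmn, hmne⟩ := Nat.find_spec hex
    have hzero : ∀ j : ℕ, 2 ≤ j → j < m → z' j = 0 := by
      intro j h2 hj
      by_contra hne
      exact (Nat.find_min hex hj) ⟨h2, by omega, hne⟩
    obtain ⟨m2, hm2eq⟩ : ∃ m2, m = m2 + 2 := ⟨m - 2, by omega⟩
    -- power law
    have claimPow : ∀ r : ℕ, m + r ≤ n + 2 →
        z' (m + r) * z' m ^ r = z' (m + 1) ^ r * z' m := by
      intro r
      induction r with
      | zero => intro _; simp [mul_comm]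
      | succ r ih =>
        intro hr
        have hrel1 : z' m * z' (m + r + 1) = z' (m + r) * z' (m + 1) := by
          have := relH (m2 + 1) (m2 + r + 1) (by omega) (by omega) (by omega) (by omega)
          rw [hm2eq]
          convert this using 3 <;> omega
        calc z' (m + (r + 1)) * z' m ^ (r + 1)
            = (z' m * z' (m + r + 1)) * z' m ^ r := by
              rw [pow_succ]; ring
          _ = (z' (m + r) * z' (m + 1)) * z' m ^ r := by rw [hrel1]
          _ = z' (m + 1) * (z' (m + r) * z' m ^ r) := by ring
          _ = z' (m + 1) * (z' (m + 1) ^ r * z' m) := by rw [ih (by omega)]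
          _ = z' (m + 1) ^ (r + 1) * z' m := by rw [pow_succ]; ring
    rcases Nat.lt_or_ge m (n + 2) with hmlt | hmge
    · -- m ≤ n + 1
      have hrel0m : (z' 0 + z' 1) * z' (m + 1) = z' 0 * z' 1 * z' m := by
        have := rel0 (m2 + 1) (by omega) (by omega)
        rw [hm2eq]
        convert this using 3 <;> omega
      by_cases hs : z' 0 + z' 1 = 0
      · -- x1 = x2 = 0 case
        have h01 : z' 0 * z' 1 = 0 := by
          have : z' 0 * z' 1 * z' m = 0 := by rw [← hrel0m, hs, zero_mul]
          exact (mul_eq_zero.mp this).resolve_right hmne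
        have hz0 : z' 0 = 0 ∧ z' 1 = 0 := by
          rcases mul_eq_zero.mp h01 with h | h
          · exact ⟨h, by have : z' 1 = -z' 0 := by linear_combination hs
                         rw [this, h, neg_zero]⟩
          · exact ⟨by have : z' 0 = -z' 1 := by linear_combination hs
                      rw [this, h, neg_zero], h⟩
        refine ⟨z' m, z' (m + 1), 0, z' m, hmne, Algebra.subset_adjoin (by simp), fun i => ?_⟩
        rw [hzi i]
        rcases Nat.lt_or_ge (i : ℕ) 2 with h2 | h2
        · refine ⟨0, ?_⟩
          rw [pow_zero, mul_one]
          interval_cases h : (i : ℕ)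
          · rw [hz0.1]; exact zero_mem _
          · rw [hz0.2]; exact zero_mem _
        · rcases Nat.lt_or_ge (i : ℕ) m with hlt | hge
          · exact ⟨0, by rw [hzero _ h2 hlt, zero_mul]; exact zero_mem _⟩
          · obtain ⟨r, hr⟩ : ∃ r, (i : ℕ) = m + r := ⟨(i : ℕ) - m, by omega⟩
            refine ⟨r, ?_⟩
            rw [hr, claimPow r (by have := i.isLt; omega)]
            exact mul_mem (pow_mem (Algebra.subset_adjoin (by simp)) r)
              (Algebra.subset_adjoin (by simp))
      · -- x1 + x2 ≠ 0 case
        refine ⟨z' 0, z' 1, z' m, z' m * (z' 0 + z' 1), mul_ne_zero hmne hs,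
          mul_mem (Algebra.subset_adjoin (by simp))
            (add_mem (Algebra.subset_adjoin (by simp)) (Algebra.subset_adjoin (by simp))),
          fun i => ?_⟩
        rw [hzi i]
        rcases Nat.lt_or_ge (i : ℕ) 2 with h2 | h2
        · refine ⟨0, ?_⟩
          rw [pow_zero, mul_one]
          interval_cases h : (i : ℕ)
          · exact Algebra.subset_adjoin (by simp)
          · exact Algebra.subset_adjoin (by simp)
        · rcases Nat.lt_or_ge (i : ℕ) m with hlt | hge
          · exact ⟨0, by rw [hzero _ h2 hlt, zero_mul]; exact zero_mem _⟩
          · obtain ⟨r, hr⟩ : ∃ r, (i : ℕ) = m + r := ⟨(i : ℕ) - m, by omega⟩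
            refine ⟨r, ?_⟩
            have hkey : z' (m + r) * (z' m * (z' 0 + z' 1)) ^ r
                = (z' 0 * z' 1 * z' m) ^ r * z' m := by
              calc z' (m + r) * (z' m * (z' 0 + z' 1)) ^ r
                  = (z' (m + r) * z' m ^ r) * (z' 0 + z' 1) ^ r := by
                    rw [mul_pow]; ring
                _ = (z' (m + 1) ^ r * z' m) * (z' 0 + z' 1) ^ r := by
                    rw [claimPow r (by have := i.isLt; omega)]
                _ = ((z' 0 + z' 1) * z' (m + 1)) ^ r * z' m := by
                    rw [mul_pow]; ring
                _ = (z' 0 * z' 1 * z' m) ^ r * z' m := by rw [hrel0m]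
            rw [hr, hkey]
            refine mul_mem (pow_mem ?_ r) (Algebra.subset_adjoin (by simp))
            exact mul_mem (mul_mem (Algebra.subset_adjoin (by simp))
              (Algebra.subset_adjoin (by simp))) (Algebra.subset_adjoin (by simp))
    · -- m = n + 2 : last variable only
      have hmeq : m = n + 2 := by omega
      have hsz : z' 0 + z' 1 = 0 := by
        have h1 : (z' 0 + z' 1) * z' (n + 2) = z' 0 * z' 1 * z' (n + 1) := rel0 n hn le_rfl
        have h2 : z' (n + 1) = 0 := hzero (n + 1) (by omega) (by omega)
        rw [h2, mul_zero] at h1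
        rcases mul_eq_zero.mp h1 with h | h
        · exact h
        · have hfind : Nat.find hex = n + 2 := by rw [← hmdef]; exact hmeq
          exact absurd (by rw [hfind]; exact h) hmne
      refine ⟨z' 0, z' (n + 2), 0, 1, one_ne_zero, one_mem _, fun i => ⟨0, ?_⟩⟩
      rw [pow_zero, mul_one, hzi i]
      rcases Nat.lt_or_ge (i : ℕ) 2 with h2 | h2
      · interval_cases h : (i : ℕ)
        · exact Algebra.subset_adjoin (by simp)
        · have : z' 1 = -z' 0 := by linear_combination hsz
          rw [this]
          exact neg_mem (Algebra.subset_adjoin (by simp))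
      · rcases Nat.lt_or_ge (i : ℕ) (n + 2) with hlt | hge
        · rw [hzero _ h2 (by omega)]
          exact zero_mem _
        · have : (i : ℕ) = n + 2 := by have := i.isLt; omega
          rw [this]
          exact Algebra.subset_adjoin (by simp)



noncomputable def auxΦ (n : ℕ) : Fin (n + 3) → MvPolynomial (Fin 3) ℂ := fun i =>
  if (i : ℕ) = 0 then X 0 else if (i : ℕ) = 1 then X 1 else
    X 2 * (X 0 * X 1) ^ ((i : ℕ) - 2) * (X 0 + X 1) ^ (n + 2 - (i : ℕ))

noncomputable def auxΨ1 (n : ℕ) : Fin (n + 3) → MvPolynomial (Fin 3) ℂ := fun i =>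
  if (i : ℕ) = 0 then X 0 else if (i : ℕ) = 2 then X 2 * X 0 ^ n else 0

noncomputable def auxΨ2 (n : ℕ) : Fin (n + 3) → MvPolynomial (Fin 3) ℂ := fun i =>
  if (i : ℕ) = 0 then X 0 else 0

section Rows

variable (n : ℕ)

lemma aux_row10 : aeval (auxΦ n) (row1 n ⟨0, by omega⟩) = X 0 + X 1 := by
  rw [row1]
  simp [auxΦ]

lemma aux_row20 : aeval (auxΦ n) (row2 n ⟨0, by omega⟩) = X 0 * X 1 := by
  rw [row2]
  simp [auxΦ]

lemma aux_row1 (k : ℕ) (hk1 : 1 ≤ k) (hkn : k ≤ n) :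
    aeval (auxΦ n) (row1 n ⟨k, by omega⟩) =
      X 2 * (X 0 * X 1) ^ (k - 1) * (X 0 + X 1) ^ (n + 1 - k) := by
  rw [row1, if_neg (by simpa using by omega : ¬ ((⟨k, by omega⟩ : Fin (n+1)) : ℕ) = 0)]
  rw [aeval_X, auxΦ]
  simp only [Fin.val_mk]
  rw [if_neg (by omega), if_neg (by omega),
    show k + 1 - 2 = k - 1 by omega, show n + 2 - (k + 1) = n + 1 - k by omega]

lemma aux_row2 (k : ℕ) (hk1 : 1 ≤ k) (hkn : k ≤ n) :
    aeval (auxΦ n) (row2 n ⟨k, by omega⟩) =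
      X 2 * (X 0 * X 1) ^ k * (X 0 + X 1) ^ (n - k) := by
  rw [row2, if_neg (by simpa using by omega : ¬ ((⟨k, by omega⟩ : Fin (n+1)) : ℕ) = 0)]
  rw [aeval_X, auxΦ]
  simp only [Fin.val_mk]
  rw [if_neg (by omega), if_neg (by omega),
    show k + 2 - 2 = k by omega, show n + 2 - (k + 2) = n - k by omega]

end Rows

lemma auxΦ_vanish (n : ℕ) (g : MvPolynomial (Fin (n + 3)) ℂ)
    (hg : g ∈ {m | ∃ i j : Fin (n + 1), m = row1 n i * row2 n j - row1 n j * row2 n i}) :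
    aeval (auxΦ n) g = 0 := by
  obtain ⟨i, j, rfl⟩ := hg
  rw [map_sub, map_mul, map_mul, sub_eq_zero]
  have key : ∀ a b : Fin (n + 1), 1 ≤ (a : ℕ) → 1 ≤ (b : ℕ) →
      aeval (auxΦ n) (row1 n a) * aeval (auxΦ n) (row2 n b) =
        aeval (auxΦ n) (row1 n b) * aeval (auxΦ n) (row2 n a) := by
    intro a b ha hb
    have ha2 : (a : ℕ) ≤ n := by have := a.isLt; omega
    have hb2 : (b : ℕ) ≤ n := by have := b.isLt; omega
    have ha' : a = ⟨(a : ℕ), by omega⟩ := (Fin.eta a a.isLt).symm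
    have hb' : b = ⟨(b : ℕ), by omega⟩ := (Fin.eta b b.isLt).symm
    rw [ha', hb', aux_row1 n _ ha ha2, aux_row2 n _ hb hb2, aux_row1 n _ hb hb2,
      aux_row2 n _ ha ha2]
    have comb : ∀ e1 e2 e3 e4 : ℕ,
        (X 2 * (X 0 * X 1) ^ e1 * (X 0 + X 1) ^ e2) *
          (X 2 * (X 0 * X 1) ^ e3 * (X 0 + X 1) ^ e4)
        = (X 2 : MvPolynomial (Fin 3) ℂ) ^ 2 * (X 0 * X 1) ^ (e1 + e3) *
            (X 0 + X 1) ^ (e2 + e4) := by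
      intro e1 e2 e3 e4
      rw [pow_add, pow_add]
      ring
    rw [comb, comb,
      show (a : ℕ) - 1 + (b : ℕ) = (b : ℕ) - 1 + (a : ℕ) by omega,
      show n + 1 - (a : ℕ) + (n - (b : ℕ)) = n + 1 - (b : ℕ) + (n - (a : ℕ)) by omega]
  have key0 : ∀ b : Fin (n + 1), 1 ≤ (b : ℕ) →
      aeval (auxΦ n) (row1 n ⟨0, by omega⟩) * aeval (auxΦ n) (row2 n b) =
        aeval (auxΦ n) (row1 n b) * aeval (auxΦ n) (row2 n ⟨0, by omega⟩) := by
    intro b hb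
    have hb2 : (b : ℕ) ≤ n := by have := b.isLt; omega
    have hb' : b = ⟨(b : ℕ), by omega⟩ := (Fin.eta b b.isLt).symm
    rw [hb', aux_row10, aux_row20, aux_row1 n _ hb hb2, aux_row2 n _ hb hb2]
    obtain ⟨l, hl⟩ : ∃ l, (b : ℕ) = l + 1 := ⟨(b : ℕ) - 1, by omega⟩
    rw [hl] at hb2 ⊢
    rw [show l + 1 - 1 = l by omega, show n + 1 - (l + 1) = (n - (l + 1)) + 1 by omega,
      pow_succ, pow_succ]
    ring
  rcases Nat.eq_zero_or_pos (i : ℕ) with hi | hi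
  · rcases Nat.eq_zero_or_pos (j : ℕ) with hj | hj
    · have : i = j := by apply Fin.ext; omega
      rw [this]
    · have hi' : i = ⟨0, by omega⟩ := by apply Fin.ext; simpa using hi
      rw [hi']
      exact key0 j hj
  · rcases Nat.eq_zero_or_pos (j : ℕ) with hj | hj
    · have hj' : j = ⟨0, by omega⟩ := by apply Fin.ext; simpa using hj
      rw [hj']
      exact (key0 i hi).symm
    · exact key i j hi hj



-- L5' : generate everything with denominators
lemma aux_allPow {D : Type*} [CommRing D] [Algebra ℂ D] {σ : Type*}
    (θ : MvPolynomial σ ℂ →ₐ[ℂ] D) (hsurj : Function.Surjective θ)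
    (S : Subalgebra ℂ D) (Q : D) (hQ : Q ∈ S)
    (hgen : ∀ i : σ, ∃ k : ℕ, θ (X i) * Q ^ k ∈ S) (d : D) :
    ∃ k : ℕ, d * Q ^ k ∈ S := by
  obtain ⟨P, rfl⟩ := hsurj d
  induction P using MvPolynomial.induction_on with
  | C c =>
    refine ⟨0, ?_⟩
    rw [pow_zero, mul_one]
    have : θ (C c) = algebraMap ℂ D c := by
      rw [← MvPolynomial.algebraMap_eq]
      exact θ.commutes c
    rw [this]
    exact S.algebraMap_mem c
  | add p q ihp ihq =>
    obtain ⟨kp, hp⟩ := ihp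
    obtain ⟨kq, hq⟩ := ihq
    refine ⟨max kp kq, ?_⟩
    rw [map_add, add_mul]
    refine add_mem ?_ ?_
    · rw [show max kp kq = kp + (max kp kq - kp) by omega, pow_add, ← mul_assoc]
      exact mul_mem hp (pow_mem hQ _)
    · rw [show max kp kq = kq + (max kp kq - kq) by omega, pow_add, ← mul_assoc]
      exact mul_mem hq (pow_mem hQ _)
  | mul_X p i ihp =>
    obtain ⟨kp, hp⟩ := ihp
    obtain ⟨ki, hi⟩ := hgen i
    refine ⟨kp + ki, ?_⟩
    rw [map_mul, pow_add]
    have : θ p * θ (X i) * (Q ^ kp * Q ^ ki) = (θ p * Q ^ kp) * (θ (X i) * Q ^ ki) := by ring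
    rw [this]
    exact mul_mem hp hi

section Chi

variable (n : ℕ)

lemma aux_chi1 (f : MvPolynomial (Fin (n + 3)) ℂ) :
    aeval (fun i : Fin 3 => if (i : ℕ) = 1 then 0 else X i) (aeval (auxΦ n) f)
      = aeval (auxΨ1 n) f := by
  have : ((aeval (fun i : Fin 3 => if (i : ℕ) = 1 then 0 else X i) :
        MvPolynomial (Fin 3) ℂ →ₐ[ℂ] MvPolynomial (Fin 3) ℂ).comp
      (aeval (auxΦ n))) = aeval (auxΨ1 n) := by
    apply MvPolynomial.algHom_ext
    intro i
    simp only [AlgHom.comp_apply, aeval_X]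
    by_cases h0 : (i : ℕ) = 0
    · simp [auxΦ, auxΨ1, h0]
    · by_cases h1 : (i : ℕ) = 1
      · simp [auxΦ, auxΨ1, h0, h1]
      · by_cases h2 : (i : ℕ) = 2
        · simp [auxΦ, auxΨ1, h0, h1, h2]
        · have hne : (i : ℕ) - 2 ≠ 0 := by omega
          simp [auxΦ, auxΨ1, h0, h1, h2, zero_pow hne]
  calc aeval (fun i : Fin 3 => if (i : ℕ) = 1 then 0 else X i) (aeval (auxΦ n) f)
      = ((aeval (fun i : Fin 3 => if (i : ℕ) = 1 then 0 else X i) :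
          MvPolynomial (Fin 3) ℂ →ₐ[ℂ] MvPolynomial (Fin 3) ℂ).comp
        (aeval (auxΦ n))) f := rfl
    _ = aeval (auxΨ1 n) f := by rw [this]

lemma aux_chi2 (f : MvPolynomial (Fin (n + 3)) ℂ) :
    aeval (fun i : Fin 3 => if (i : ℕ) = 2 then 0 else X i) (aeval (auxΨ1 n) f)
      = aeval (auxΨ2 n) f := by
  have : ((aeval (fun i : Fin 3 => if (i : ℕ) = 2 then 0 else X i) :
        MvPolynomial (Fin 3) ℂ →ₐ[ℂ] MvPolynomial (Fin 3) ℂ).comp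
      (aeval (auxΨ1 n))) = aeval (auxΨ2 n) := by
    apply MvPolynomial.algHom_ext
    intro i
    simp only [AlgHom.comp_apply, aeval_X]
    by_cases h0 : (i : ℕ) = 0
    · simp [auxΨ1, auxΨ2, h0]
    · by_cases h2 : (i : ℕ) = 2
      · simp [auxΨ1, auxΨ2, h0, h2]
      · simp [auxΨ1, auxΨ2, h0, h2]
  exact DFunLike.congr_fun this f

lemma aux_chi3 (f : MvPolynomial (Fin (n + 3)) ℂ) :
    aeval (fun _ : Fin 3 => (0 : MvPolynomial (Fin 3) ℂ)) (aeval (auxΨ2 n) f)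
      = aeval (fun _ : Fin (n + 3) => (0 : MvPolynomial (Fin 3) ℂ)) f := by
  have : ((aeval (fun _ : Fin 3 => (0 : MvPolynomial (Fin 3) ℂ)) :
        MvPolynomial (Fin 3) ℂ →ₐ[ℂ] MvPolynomial (Fin 3) ℂ).comp
      (aeval (auxΨ2 n))) = aeval (fun _ : Fin (n + 3) => (0 : MvPolynomial (Fin 3) ℂ)) := by
    apply MvPolynomial.algHom_ext
    intro i
    simp only [AlgHom.comp_apply, aeval_X]
    by_cases h0 : (i : ℕ) = 0
    · simp [auxΨ2, h0]
    · simp [auxΨ2, h0]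
  exact DFunLike.congr_fun this f

end Chi



-- row2 is killed by any evaluation sending the variables X1, X3, X4, ..., X_{n+2} to 0
lemma aux_row2_vanish (n : ℕ) (F : Fin (n + 3) → MvPolynomial (Fin 3) ℂ)
    (h1 : F 1 = 0) (hk : ∀ i : Fin (n + 3), 3 ≤ (i : ℕ) → F i = 0)
    (j : Fin (n + 1)) : aeval F (row2 n j) = 0 := by
  by_cases hj : (j : ℕ) = 0
  · rw [row2, if_pos hj, map_mul, aeval_X, aeval_X, h1, mul_zero]
  · rw [row2, if_neg hj, aeval_X]
    exact hk _ (by simp; omega)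

lemma aux_minor_vanish (n : ℕ) (F : Fin (n + 3) → MvPolynomial (Fin 3) ℂ)
    (h1 : F 1 = 0) (hk : ∀ i : Fin (n + 3), 3 ≤ (i : ℕ) → F i = 0)
    (g : MvPolynomial (Fin (n + 3)) ℂ)
    (hg : g ∈ {m | ∃ i j : Fin (n + 1), m = row1 n i * row2 n j - row1 n j * row2 n i}) :
    aeval F g = 0 := by
  obtain ⟨i, j, rfl⟩ := hg
  rw [map_sub, map_mul, map_mul, aux_row2_vanish n F h1 hk i, aux_row2_vanish n F h1 hk j]
  ring


theorem stmt8 (n : ℕ) (hn : 1 ≤ n) :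
    ringKrullDim (MvPolynomial (Fin (n + 3)) ℂ ⧸
      Ideal.span {m | ∃ i j : Fin (n + 1),
        m = row1 n i * row2 n j - row1 n j * row2 n i}) = 3 := by
  classical
  refine le_antisymm ?_ ?_
  · -- UPPER BOUND
    refine iSup_le ?_
    intro p
    have hlen : p.length ≤ 3 := by
      by_contra hcon
      push_neg at hcon
      let A := MvPolynomial (Fin (n + 3)) ℂ ⧸
        Ideal.span {m | ∃ i j : Fin (n + 1),
          m = row1 n i * row2 n j - row1 n j * row2 n i}
      set P : Fin 5 → PrimeSpectrum A := fun i => p.toFun ⟨(i : ℕ), by omega⟩ with hP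
      have hPlt : ∀ i j : Fin 5, (i : ℕ) < (j : ℕ) → (P i).asIdeal < (P j).asIdeal := by
        intro i j hij
        exact p.strictMono (by rw [Fin.lt_def]; simpa using hij)
      haveI hprime : ∀ i : Fin 5, (P i).asIdeal.IsPrime := fun i => (P i).isPrime
      -- base : empty family mod (P 4)
      haveI hnt4 : Nontrivial (A ⧸ (P 4).asIdeal) :=
        Ideal.Quotient.nontrivial_iff.mpr (hprime 4).ne_top
      have h0 : AlgebraicIndependent ℂ
          (fun i : Fin 0 => Ideal.Quotient.mk (P 4).asIdeal (Fin.elim0 i)) := by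
        rw [algebraicIndependent_empty_type_iff]
        exact (algebraMap ℂ (A ⧸ (P 4).asIdeal)).injective
      obtain ⟨t1, h1⟩ := aux_step (hPlt 3 4 (by decide)) h0
      obtain ⟨t2, h2⟩ := aux_step (hPlt 2 3 (by decide)) h1
      obtain ⟨t3, h3⟩ := aux_step (hPlt 1 2 (by decide)) h2
      obtain ⟨t4, h4⟩ := aux_step (hPlt 0 1 (by decide)) h3
      -- now contradict using the structure of A / (P 0)
      set q0 : Ideal A := (P 0).asIdeal with hq0
      haveI : q0.IsPrime := hprime 0
      haveI : IsDomain (A ⧸ q0) := Ideal.Quotient.isDomain q0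
      set θ : MvPolynomial (Fin (n + 3)) ℂ →ₐ[ℂ] (A ⧸ q0) :=
        (Ideal.Quotient.mkₐ ℂ q0).comp (Ideal.Quotient.mkₐ ℂ
          (Ideal.span {m | ∃ i j : Fin (n + 1),
            m = row1 n i * row2 n j - row1 n j * row2 n i})) with hθ
      have haeval : ∀ g : MvPolynomial (Fin (n + 3)) ℂ, aeval (fun i => θ (X i)) g = θ g := by
        intro g
        have hc : θ.comp (aeval X) = aeval (fun i => θ (X i)) :=
          MvPolynomial.comp_aeval (B := A ⧸ q0) (f := X) θ
        rw [← hc, AlgHom.comp_apply, MvPolynomial.aeval_X_left_apply]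
      have hrel : ∀ i j : Fin (n + 1),
          aeval (fun i => θ (X i)) (row1 n i * row2 n j - row1 n j * row2 n i) = 0 := by
        intro i j
        have hmem : (row1 n i * row2 n j - row1 n j * row2 n i) ∈
            ({m | ∃ i j : Fin (n + 1), m = row1 n i * row2 n j - row1 n j * row2 n i} :
              Set (MvPolynomial (Fin (n + 3)) ℂ)) := ⟨i, j, rfl⟩
        rw [haeval, hθ]
        simp only [AlgHom.comp_apply]
        rw [Ideal.Quotient.mkₐ_eq_mk, Ideal.Quotient.mkₐ_eq_mk,
          Ideal.Quotient.eq_zero_iff_mem.mpr (Ideal.subset_span hmem), map_zero]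
      obtain ⟨u, v, w, Q, hQ0, hQS, hz⟩ := aux_catalogue n hn (fun i => θ (X i)) (by
        intro i j
        have hmem : (row1 n i * row2 n j - row1 n j * row2 n i) ∈
            ({m | ∃ i j : Fin (n + 1), m = row1 n i * row2 n j - row1 n j * row2 n i} :
              Set (MvPolynomial (Fin (n + 3)) ℂ)) := ⟨i, j, rfl⟩
        rw [haeval, hθ]
        simp only [AlgHom.comp_apply]
        rw [Ideal.Quotient.mkₐ_eq_mk, Ideal.Quotient.mkₐ_eq_mk,
          Ideal.Quotient.eq_zero_iff_mem.mpr (Ideal.subset_span hmem), map_zero])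
      have hsurj : Function.Surjective θ := by
        rw [hθ, AlgHom.coe_comp]
        exact (Ideal.Quotient.mkₐ_surjective ℂ _).comp (Ideal.Quotient.mkₐ_surjective ℂ _)
      have ht : ∀ i : Fin 4, ∃ k : ℕ,
          (Ideal.Quotient.mk q0 (t4 i)) * Q ^ k ∈ Algebra.adjoin ℂ ({u, v, w} : Set (A ⧸ q0)) :=
        fun i => aux_allPow θ hsurj _ Q hQS hz _
      exact aux_notIndep u v w Q hQ0 hQS (fun i => Ideal.Quotient.mk q0 (t4 i)) ht h4
    exact_mod_cast hlen
  · -- LOWER BOUND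
    set R := MvPolynomial (Fin (n + 3)) ℂ with hR
    set Igens : Set R := {m | ∃ i j : Fin (n + 1),
      m = row1 n i * row2 n j - row1 n j * row2 n i} with hIgens
    set I : Ideal R := Ideal.span Igens with hI
    have hvφ : ∀ a ∈ I, (aeval (auxΦ n) : R →ₐ[ℂ] MvPolynomial (Fin 3) ℂ).toRingHom a = 0 := by
      have hle : I ≤ RingHom.ker (aeval (auxΦ n) : R →ₐ[ℂ] MvPolynomial (Fin 3) ℂ).toRingHom :=
        Ideal.span_le.mpr (fun g hg => RingHom.mem_ker.mpr (auxΦ_vanish n g hg))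
      exact fun a ha => RingHom.mem_ker.mp (hle ha)
    have hvψ1 : ∀ a ∈ I, (aeval (auxΨ1 n) : R →ₐ[ℂ] MvPolynomial (Fin 3) ℂ).toRingHom a = 0 := by
      have hz1 : auxΨ1 n 1 = 0 := by simp [auxΨ1]
      have hzk : ∀ i : Fin (n + 3), 3 ≤ (i : ℕ) → auxΨ1 n i = 0 := by
        intro i hi
        rw [auxΨ1, if_neg (by omega), if_neg (by omega)]
      have hle : I ≤ RingHom.ker (aeval (auxΨ1 n) : R →ₐ[ℂ] MvPolynomial (Fin 3) ℂ).toRingHom :=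
        Ideal.span_le.mpr (fun g hg => RingHom.mem_ker.mpr
          (aux_minor_vanish n (auxΨ1 n) hz1 hzk g hg))
      exact fun a ha => RingHom.mem_ker.mp (hle ha)
    have hvψ2 : ∀ a ∈ I, (aeval (auxΨ2 n) : R →ₐ[ℂ] MvPolynomial (Fin 3) ℂ).toRingHom a = 0 := by
      have hz1 : auxΨ2 n 1 = 0 := by simp [auxΨ2]
      have hzk : ∀ i : Fin (n + 3), 3 ≤ (i : ℕ) → auxΨ2 n i = 0 := by
        intro i hi
        rw [auxΨ2, if_neg (by omega)]
      have hle : I ≤ RingHom.ker (aeval (auxΨ2 n) : R →ₐ[ℂ] MvPolynomial (Fin 3) ℂ).toRingHom :=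
        Ideal.span_le.mpr (fun g hg => RingHom.mem_ker.mpr
          (aux_minor_vanish n (auxΨ2 n) hz1 hzk g hg))
      exact fun a ha => RingHom.mem_ker.mp (hle ha)
    have hvψ3 : ∀ a ∈ I, (aeval (fun _ : Fin (n+3) => (0 : MvPolynomial (Fin 3) ℂ)) :
        R →ₐ[ℂ] MvPolynomial (Fin 3) ℂ).toRingHom a = 0 := by
      have hle : I ≤ RingHom.ker (aeval (fun _ : Fin (n+3) => (0 : MvPolynomial (Fin 3) ℂ)) :
          R →ₐ[ℂ] MvPolynomial (Fin 3) ℂ).toRingHom :=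
        Ideal.span_le.mpr (fun g hg => RingHom.mem_ker.mpr
          (aux_minor_vanish n _ rfl (fun _ _ => rfl) g hg))
      exact fun a ha => RingHom.mem_ker.mp (hle ha)
    set φA : R ⧸ I →+* MvPolynomial (Fin 3) ℂ :=
      Ideal.Quotient.lift I _ hvφ with hφA
    set ψ1A : R ⧸ I →+* MvPolynomial (Fin 3) ℂ :=
      Ideal.Quotient.lift I _ hvψ1 with hψ1A
    set ψ2A : R ⧸ I →+* MvPolynomial (Fin 3) ℂ :=
      Ideal.Quotient.lift I _ hvψ2 with hψ2A
    set ψ3A : R ⧸ I →+* MvPolynomial (Fin 3) ℂ :=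
      Ideal.Quotient.lift I _ hvψ3 with hψ3A
    set p0 : PrimeSpectrum (R ⧸ I) := ⟨RingHom.ker φA, RingHom.ker_isPrime φA⟩ with hp0
    set p1 : PrimeSpectrum (R ⧸ I) := ⟨RingHom.ker ψ1A, RingHom.ker_isPrime ψ1A⟩ with hp1
    set p2 : PrimeSpectrum (R ⧸ I) := ⟨RingHom.ker ψ2A, RingHom.ker_isPrime ψ2A⟩ with hp2
    set p3 : PrimeSpectrum (R ⧸ I) := ⟨RingHom.ker ψ3A, RingHom.ker_isPrime ψ3A⟩ with hp3
    -- inclusions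
    have hle01 : RingHom.ker φA ≤ RingHom.ker ψ1A := by
      intro x hx
      obtain ⟨f, rfl⟩ := Ideal.Quotient.mk_surjective x
      rw [RingHom.mem_ker] at hx ⊢
      rw [hφA, Ideal.Quotient.lift_mk] at hx
      rw [hψ1A, Ideal.Quotient.lift_mk]
      have hc := aux_chi1 n f
      rw [show ((aeval (auxΦ n) : R →ₐ[ℂ] MvPolynomial (Fin 3) ℂ)).toRingHom f
          = aeval (auxΦ n) f from rfl] at hx
      rw [hx, map_zero] at hc
      exact hc.symm
    have hle12 : RingHom.ker ψ1A ≤ RingHom.ker ψ2A := by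
      intro x hx
      obtain ⟨f, rfl⟩ := Ideal.Quotient.mk_surjective x
      rw [RingHom.mem_ker] at hx ⊢
      rw [hψ1A, Ideal.Quotient.lift_mk] at hx
      rw [hψ2A, Ideal.Quotient.lift_mk]
      have hc := aux_chi2 n f
      rw [show ((aeval (auxΨ1 n) : R →ₐ[ℂ] MvPolynomial (Fin 3) ℂ)).toRingHom f
          = aeval (auxΨ1 n) f from rfl] at hx
      rw [hx, map_zero] at hc
      exact hc.symm
    have hle23 : RingHom.ker ψ2A ≤ RingHom.ker ψ3A := by
      intro x hx
      obtain ⟨f, rfl⟩ := Ideal.Quotient.mk_surjective x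
      rw [RingHom.mem_ker] at hx ⊢
      rw [hψ2A, Ideal.Quotient.lift_mk] at hx
      rw [hψ3A, Ideal.Quotient.lift_mk]
      have hc := aux_chi3 n f
      rw [show ((aeval (auxΨ2 n) : R →ₐ[ℂ] MvPolynomial (Fin 3) ℂ)).toRingHom f
          = aeval (auxΨ2 n) f from rfl] at hx
      rw [hx, map_zero] at hc
      exact hc.symm
    -- witnesses for strictness
    have hw1 : Ideal.Quotient.mk I (X 1) ∈ RingHom.ker ψ1A ∧
        Ideal.Quotient.mk I (X 1) ∉ RingHom.ker φA := by
      constructor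
      · rw [RingHom.mem_ker, hψ1A, Ideal.Quotient.lift_mk]
        show (aeval (auxΨ1 n)) (X 1) = 0
        rw [aeval_X, auxΨ1]
        norm_num
      · rw [RingHom.mem_ker, hφA, Ideal.Quotient.lift_mk]
        show ¬ (aeval (auxΦ n)) (X 1) = 0
        rw [aeval_X, auxΦ]
        norm_num
    have hw2 : Ideal.Quotient.mk I (X 2) ∈ RingHom.ker ψ2A ∧
        Ideal.Quotient.mk I (X 2) ∉ RingHom.ker ψ1A := by
      constructor
      · rw [RingHom.mem_ker, hψ2A, Ideal.Quotient.lift_mk]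
        show (aeval (auxΨ2 n)) (X 2) = 0
        rw [aeval_X, auxΨ2]
        norm_num
        simp [Nat.mod_eq_of_lt (show 2 < n + 3 by omega)]
      · rw [RingHom.mem_ker, hψ1A, Ideal.Quotient.lift_mk]
        show ¬ (aeval (auxΨ1 n)) (X 2) = 0
        rw [aeval_X, auxΨ1]
        norm_num
        simp [Nat.mod_eq_of_lt (show 2 < n + 3 by omega)]
    have hw3 : Ideal.Quotient.mk I (X 0) ∈ RingHom.ker ψ3A ∧
        Ideal.Quotient.mk I (X 0) ∉ RingHom.ker ψ2A := by
      constructor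
      · rw [RingHom.mem_ker, hψ3A, Ideal.Quotient.lift_mk]
        show (aeval (fun _ : Fin (n+3) => (0 : MvPolynomial (Fin 3) ℂ))) (X 0) = 0
        rw [aeval_X]
      · rw [RingHom.mem_ker, hψ2A, Ideal.Quotient.lift_mk]
        show ¬ (aeval (auxΨ2 n)) (X 0) = 0
        rw [aeval_X, auxΨ2]
        norm_num
    have hlt01 : p0 < p1 := by
      rw [← PrimeSpectrum.asIdeal_lt_asIdeal]
      show RingHom.ker φA < RingHom.ker ψ1A
      exact lt_of_le_of_ne hle01 (fun h => hw1.2 (h ▸ hw1.1))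
    have hlt12 : p1 < p2 := by
      rw [← PrimeSpectrum.asIdeal_lt_asIdeal]
      show RingHom.ker ψ1A < RingHom.ker ψ2A
      exact lt_of_le_of_ne hle12 (fun h => hw2.2 (h ▸ hw2.1))
    have hlt23 : p2 < p3 := by
      rw [← PrimeSpectrum.asIdeal_lt_asIdeal]
      show RingHom.ker ψ2A < RingHom.ker ψ3A
      exact lt_of_le_of_ne hle23 (fun h => hw3.2 (h ▸ hw3.1))
    set chain : LTSeries (PrimeSpectrum (R ⧸ I)) :=
      ⟨3, ![p0, p1, p2, p3], by
        intro i
        fin_cases i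
        · exact hlt01
        · exact hlt12
        · exact hlt23⟩ with hchain
    have := Order.LTSeries.length_le_krullDim chain
    exact_mod_cast this
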